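/- Indistinguishability under few variables: for k > 2^m, consider the frame H_k (as above, with two R_v-columns of k R_v-irreflexive, R_h-reflexive-universal points) and the frame G_k obtained from H_k by merging, in each column, two points into a single point that is both R_h- and R_v-reflexive (so each column of G_k has k−2 irreflexive points and one doubly-reflexive point). Then for every valuation on H_k using at most m propositional variables, there is a valuation on G_k and a surjective p-morphism from the model on H_k onto the model on G_k (preserving the valuations). -/

import Mathlib

/-- Vertical relation of the frame `H_k`: two points are related iff they lie
in the same column (`A` or `B`) and are distinct. -/
def HRv (k : ℕ) : Fin k ⊕ Fin k → Fin k ⊕ Fin k → Prop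
  | Sum.inl a, Sum.inl b => a ≠ b
  | Sum.inr a, Sum.inr b => a ≠ b
  | _, _ => False

/-- Vertical relation of the frame `G_k` (here on `Fin k ⊕ Fin k`, used with
`k - 1` columns): distinct points of the same column are related, and the
designated point `0` of each column is in addition reflexive. -/
def GRv (k : ℕ) : Fin k ⊕ Fin k → Fin k ⊕ Fin k → Prop
  | Sum.inl a, Sum.inl b => a ≠ b ∨ (a.val = 0 ∧ b.val = 0)
  | Sum.inr a, Sum.inr b => a ≠ b ∨ (a.val = 0 ∧ b.val = 0)
  | _, _ => False

/-- Bimodal frame p-morphism (surjective, forward and backward conditions for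
both relations). -/
def FramePMor {A : Type u} {B : Type v} (RhA RvA : A → A → Prop)
    (RhB RvB : B → B → Prop) (f : A → B) : Prop :=
  Function.Surjective f ∧
  (∀ a a' : A, RhA a a' → RhB (f a) (f a')) ∧
  (∀ a a' : A, RvA a a' → RvB (f a) (f a')) ∧
  (∀ (a : A) (b : B), RhB (f a) b → ∃ a' : A, RhA a a' ∧ f a' = b) ∧
  (∀ (a : A) (b : B), RvB (f a) b → ∃ a' : A, RvA a a' ∧ f a' = b)

section aux

/-- Collapse map for one column: merges `a` and `b` to the point with value 0. -/
lemma col_merge (n : ℕ) (hn : 0 < n) (a b : Fin (n+1)) (hab : a ≠ b) :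
    ∃ g : Fin (n+1) → Fin n, Function.Surjective g ∧
      (∀ x y, g x = g y → x = y ∨ ((x = a ∨ x = b) ∧ (y = a ∨ y = b))) ∧
      (g a).val = 0 ∧ g a = g b := by
  set e := finSuccEquiv' b with he
  obtain ⟨j₀, hj₀⟩ : ∃ j₀, e a = some j₀ := by
    cases h : e a with
    | none =>
      exfalso
      have : e a = e b := by rw [h, finSuccEquiv'_at]
      exact hab (e.injective this)
    | some j => exact ⟨j, rfl⟩
  set z : Fin n := ⟨0, hn⟩ with hz
  refine ⟨fun x => Equiv.swap z j₀ ((e x).getD j₀), ?_, ?_, ?_, ?_⟩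
  · intro j
    refine ⟨e.symm (some (Equiv.swap z j₀ j)), ?_⟩
    simp [Equiv.apply_symm_apply, Equiv.swap_apply_self]
  · intro x y h
    have hd : (e x).getD j₀ = (e y).getD j₀ := (Equiv.swap z j₀).injective h
    have key : ∀ w : Fin (n+1), e w = none → w = b := by
      intro w hw
      apply e.injective
      rw [hw, finSuccEquiv'_at]
    have key2 : ∀ w : Fin (n+1), e w = some j₀ → w = a := by
      intro w hw
      apply e.injective; rw [hw, hj₀]
    cases hx : e x with
    | none =>
      cases hy : e y with
      | none => exact Or.inl ((key x hx).trans (key y hy).symm)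
      | some jy =>
        rw [hx, hy] at hd; simp at hd
        exact Or.inr ⟨Or.inr (key x hx), Or.inl (key2 y (by rw [hy, hd]))⟩
    | some jx =>
      cases hy : e y with
      | none =>
        rw [hx, hy] at hd; simp at hd
        exact Or.inr ⟨Or.inl (key2 x (by rw [hx, hd])), Or.inr (key y hy)⟩
      | some jy =>
        rw [hx, hy] at hd; simp at hd
        exact Or.inl (e.injective (by rw [hx, hy, hd]))
  · simp [hj₀, Equiv.swap_apply_right, hz]
  · have : e b = none := finSuccEquiv'_at b
    simp [hj₀, this, Equiv.swap_apply_right]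

/-- Pigeonhole: two points agreeing on all valuations. -/
lemma exists_agree (k m : ℕ) (hkm : 2 ^ m < k) (V : ℕ → Set (Fin k))
    (hgen : ∀ i, m ≤ i → V i = ∅) :
    ∃ a b : Fin k, a ≠ b ∧ ∀ i, (a ∈ V i ↔ b ∈ V i) := by
  classical
  have hcard : Fintype.card (Fin m → Prop) < Fintype.card (Fin k) := by
    simp [Fintype.card_fun]
    exact hkm
  obtain ⟨a, b, hab, h⟩ := Fintype.exists_ne_map_eq_of_card_lt
    (fun x : Fin k => fun j : Fin m => x ∈ V j) hcard
  refine ⟨a, b, hab, fun i => ?_⟩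
  by_cases hi : i < m
  · have := congrFun h ⟨i, hi⟩
    simp only at this
    rw [this]
  · rw [hgen i (le_of_not_gt hi)]; simp

end aux

section aux2

/-- Derived properties of a merge map. -/
lemma merged_props (n : ℕ) (g : Fin (n+1) → Fin n) (a b : Fin (n+1)) (hab : a ≠ b)
    (hsurj : Function.Surjective g)
    (hmerge : ∀ x y, g x = g y → x = y ∨ ((x = a ∨ x = b) ∧ (y = a ∨ y = b)))
    (h0 : (g a).val = 0) (hgab : g a = g b) :
    (∀ x y, x ≠ y → g x ≠ g y ∨ ((g x).val = 0 ∧ (g y).val = 0)) ∧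
    (∀ x c, (g x ≠ c ∨ ((g x).val = 0 ∧ c.val = 0)) → ∃ y, x ≠ y ∧ g y = c) := by
  have hval : ∀ x, x = a ∨ x = b → g x = g a := by
    rintro x (rfl | rfl)
    · rfl
    · exact hgab.symm
  constructor
  · intro x y hxy
    by_cases h : g x = g y
    · rcases hmerge x y h with rfl | ⟨hx, hy⟩
      · exact absurd rfl hxy
      · right
        rw [hval x hx, hval y hy]
        exact ⟨h0, h0⟩
    · exact Or.inl h
  · intro x c hc
    by_cases h : g x = c
    · have hx0 : (g x).val = 0 := by
        rcases hc with h' | ⟨h1, _⟩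
        · exact absurd h h'
        · exact h1
      have hxa : g x = g a := Fin.ext (by rw [hx0, h0])
      rcases hmerge x a hxa with rfl | ⟨hx, _⟩
      · exact ⟨b, hab, by rw [← hgab, hxa, ← h]⟩
      · rcases hx with rfl | rfl
        · exact ⟨b, hab, by rw [← hgab, ← hxa, h]⟩
        · exact ⟨a, (Ne.symm hab), by rw [← hxa, h]⟩
    · obtain ⟨y, hy⟩ := hsurj c
      refine ⟨y, fun hxy => h (hxy ▸ hy), hy⟩

end aux2

theorem stmt_15 (k m : ℕ) (hkm : 2 ^ m < k)
    (Val : ℕ → Set (Fin k ⊕ Fin k))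
    (hgen : ∀ i : ℕ, m ≤ i → Val i = ∅) :
    ∃ (Val' : ℕ → Set (Fin (k - 1) ⊕ Fin (k - 1)))
      (f : Fin k ⊕ Fin k → Fin (k - 1) ⊕ Fin (k - 1)),
      FramePMor (fun _ _ => True) (HRv k) (fun _ _ => True) (GRv (k - 1)) f ∧
      ∀ (i : ℕ) (w : Fin k ⊕ Fin k), w ∈ Val i ↔ f w ∈ Val' i := by
  have hk2 : 2 ≤ k := lt_of_le_of_lt (Nat.one_le_two_pow) hkm
  obtain ⟨n, rfl⟩ : ∃ n, k = n + 1 := ⟨k - 1, (Nat.succ_pred_eq_of_pos (by omega)).symm⟩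
  have hn : 0 < n := by omega
  -- column valuations
  set V1 : ℕ → Set (Fin (n+1)) := fun i => {x | Sum.inl x ∈ Val i} with hV1
  set V2 : ℕ → Set (Fin (n+1)) := fun i => {x | Sum.inr x ∈ Val i} with hV2
  obtain ⟨a₁, b₁, hab₁, hagree₁⟩ := exists_agree (n+1) m hkm V1
    (fun i hi => by simp [hV1, hgen i hi])
  obtain ⟨a₂, b₂, hab₂, hagree₂⟩ := exists_agree (n+1) m hkm V2
    (fun i hi => by simp [hV2, hgen i hi])
  obtain ⟨g₁, hs₁, hm₁, h0₁, hgab₁⟩ := col_merge n hn a₁ b₁ hab₁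
  obtain ⟨g₂, hs₂, hm₂, h0₂, hgab₂⟩ := col_merge n hn a₂ b₂ hab₂
  obtain ⟨hfwd₁, hback₁⟩ := merged_props n g₁ a₁ b₁ hab₁ hs₁ hm₁ h0₁ hgab₁
  obtain ⟨hfwd₂, hback₂⟩ := merged_props n g₂ a₂ b₂ hab₂ hs₂ hm₂ h0₂ hgab₂
  -- the p-morphism
  refine ⟨fun i => Sum.map g₁ g₂ '' Val i, Sum.map g₁ g₂, ⟨?_, ?_, ?_, ?_, ?_⟩, ?_⟩
  · -- surjective
    rintro (c | c)
    · obtain ⟨x, hx⟩ := hs₁ c; exact ⟨Sum.inl x, by simp [hx]⟩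
    · obtain ⟨x, hx⟩ := hs₂ c; exact ⟨Sum.inr x, by simp [hx]⟩
  · intro _ _ _; trivial
  · -- forward Rv
    rintro (x | x) (y | y) h
    · exact hfwd₁ x y h
    · exact h.elim
    · exact h.elim
    · exact hfwd₂ x y h
  · -- back Rh
    intro w c _
    rcases c with c | c
    · obtain ⟨x, hx⟩ := hs₁ c; exact ⟨Sum.inl x, trivial, by simp [hx]⟩
    · obtain ⟨x, hx⟩ := hs₂ c; exact ⟨Sum.inr x, trivial, by simp [hx]⟩
  · -- back Rv
    rintro (x | x) (c | c) h
    · obtain ⟨y, hy, hgy⟩ := hback₁ x c h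
      exact ⟨Sum.inl y, hy, by simp [hgy]⟩
    · exact h.elim
    · exact h.elim
    · obtain ⟨y, hy, hgy⟩ := hback₂ x c h
      exact ⟨Sum.inr y, hy, by simp [hgy]⟩
  · -- valuation condition
    intro i w
    constructor
    · intro hw; exact ⟨w, hw, rfl⟩
    · rintro ⟨w', hw', heq⟩
      -- f w' = f w implies same membership
      rcases w with x | x <;> rcases w' with y | y
      · simp only [Sum.map_inl, Sum.inl.injEq] at heq
        rcases hm₁ y x heq with rfl | ⟨hy, hx⟩
        · exact hw'
        · have key : ∀ u v : Fin (n+1), (u = a₁ ∨ u = b₁) → (v = a₁ ∨ v = b₁) →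
              (Sum.inl u ∈ Val i ↔ Sum.inl v ∈ Val i) := by
            rintro u v (rfl | rfl) (rfl | rfl)
            · exact Iff.rfl
            · exact hagree₁ i
            · exact (hagree₁ i).symm
            · exact Iff.rfl
          exact (key y x hy hx).mp hw'
      · simp at heq
      · simp at heq
      · simp only [Sum.map_inr, Sum.inr.injEq] at heq
        rcases hm₂ y x heq with rfl | ⟨hy, hx⟩
        · exact hw'
        · have key : ∀ u v : Fin (n+1), (u = a₂ ∨ u = b₂) → (v = a₂ ∨ v = b₂) →
              (Sum.inr u ∈ Val i ↔ Sum.inr v ∈ Val i) := by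
            rintro u v (rfl | rfl) (rfl | rfl)
            · exact Iff.rfl
            · exact hagree₂ i
            · exact (hagree₂ i).symm
            · exact Iff.rfl
          exact (key y x hy hx).mp hw'
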